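/- Define U(η) := ((3/10)·(5/12 + 1 − η²))^(1/3) for η ∈ [0, 1] and η_w := 1. Then U(η) > 0 on [0,1], U satisfies d²U/dη² + 3·U^(−1)·(dU/dη)² + (1/5)·η·U^(−3)·(dU/dη) + (1/5)·U^(−2) = 0 for all η ∈ (0, 1), together with dU/dη(0) = 0, U(1) = 1/2, and dU/dη(1) = −4/5; that is, (U, η_w) is an exact solution of the similarity free boundary problem with parameters H = 1/2 and L = −1/2 (note L/(5H³) = −4/5). -/

import Mathlib

noncomputable def ff (η : ℝ) : ℝ := (3 / 10) * (5 / 12 + 1 - η ^ 2)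

lemma ff_pos {η : ℝ} (h : η ^ 2 ≤ 1) : 0 < ff η := by unfold ff; nlinarith

lemma hasDerivAt_ff (η : ℝ) : HasDerivAt ff (-(3/5) * η) η := by
  have h := (((hasDerivAt_pow 2 η).const_sub ((5:ℝ)/12 + 1)).const_mul ((3:ℝ)/10))
  refine h.congr_deriv ?_
  simp; ring

lemma hasDerivAt_U {η : ℝ} (h : ff η ≠ 0) :
    HasDerivAt (fun x => ff x ^ ((1:ℝ)/3)) (-(1/5) * η * ff η ^ (-(2:ℝ)/3)) η := by
  have h1 := (hasDerivAt_ff η).rpow_const (p := (1:ℝ)/3) (Or.inl h)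
  convert h1 using 1
  rw [show (1:ℝ)/3 - 1 = -(2:ℝ)/3 by norm_num]
  ring

lemma hasDerivAt_g {η : ℝ} (h : ff η ≠ 0) :
    HasDerivAt (fun x => -(1/5) * x * ff x ^ (-(2:ℝ)/3))
      (-(1/5) * ff η ^ (-(2:ℝ)/3) - (2/25) * η ^ 2 * ff η ^ (-(5:ℝ)/3)) η := by
  have h1 := (hasDerivAt_ff η).rpow_const (p := -(2:ℝ)/3) (Or.inl h)
  have h2 := ((hasDerivAt_id η).const_mul (-(1/5):ℝ)).mul h1
  refine h2.congr_deriv ?_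
  have : -(2:ℝ)/3 - 1 = -(5:ℝ)/3 := by norm_num
  rw [this]
  simp only [id]
  ring

lemma deriv_U_eq {η : ℝ} (h : ff η ≠ 0) :
    deriv (fun x => ff x ^ ((1:ℝ)/3)) η = -(1/5) * η * ff η ^ (-(2:ℝ)/3) :=
  (hasDerivAt_U h).deriv

lemma cube_root_eighth : ((1:ℝ)/8) ^ ((1:ℝ)/3) = 1/2 := by
  rw [show (1:ℝ)/8 = ((1:ℝ)/2) ^ (3:ℕ) by norm_num, ← Real.rpow_natCast ((1:ℝ)/2) 3,
    ← Real.rpow_mul (by norm_num : (0:ℝ) ≤ 1/2)]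
  norm_num

lemma pow_eighth : ((1:ℝ)/8) ^ (-(2:ℝ)/3) = 4 := by
  rw [show (1:ℝ)/8 = ((1:ℝ)/2) ^ (3:ℕ) by norm_num, ← Real.rpow_natCast ((1:ℝ)/2) 3,
    ← Real.rpow_mul (by norm_num : (0:ℝ) ≤ 1/2)]
  rw [show ((3:ℕ):ℝ) * (-(2:ℝ)/3) = ((-2:ℤ):ℝ) by push_cast; ring, Real.rpow_intCast]
  norm_num

/-- The explicit function `U(η) = ((3/10)(5/12 + 1 − η²))^{1/3}` with `η_w = 1`
is an exact solution of the similarity free boundary problem for the viscous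
fluid spreading model with `H = 1/2` and `L = −1/2` (so `L/(5H³) = −4/5`). -/
theorem stmt_16 :
    let U : ℝ → ℝ := fun η => ((3 / 10) * (5 / 12 + 1 - η ^ 2)) ^ ((1 : ℝ) / 3)
    (∀ η ∈ Set.Icc (0 : ℝ) 1, 0 < U η)
    ∧ (∀ η ∈ Set.Ioo (0 : ℝ) 1,
        deriv (deriv U) η + 3 * (U η)⁻¹ * (deriv U η) ^ 2
          + (1 / 5) * η * (U η) ^ (-3 : ℤ) * deriv U η
          + (1 / 5) * (U η) ^ (-2 : ℤ) = 0)
    ∧ deriv U 0 = 0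
    ∧ U 1 = 1 / 2
    ∧ deriv U 1 = -4 / 5 := by
  intro U
  have hUff : U = fun x => ff x ^ ((1:ℝ)/3) := rfl
  refine ⟨?_, ?_, ?_, ?_, ?_⟩
  · intro η hη
    have hf : 0 < ff η := ff_pos (by nlinarith [hη.1, hη.2])
    exact Real.rpow_pos_of_pos hf _
  · intro η hη
    obtain ⟨hη0, hη1⟩ := hη
    have hf : 0 < ff η := ff_pos (by nlinarith)
    have hfne : ff η ≠ 0 := ne_of_gt hf
    -- deriv U = g eventually near η
    have hcont : ContinuousAt ff η := by
      unfold ff; fun_prop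
    have hev : ∀ᶠ x in nhds η, ff x ≠ 0 := hcont.eventually_ne hfne
    have hderiv_ev : deriv U =ᶠ[nhds η] fun x => -(1/5) * x * ff x ^ (-(2:ℝ)/3) := by
      filter_upwards [hev] with x hx
      rw [hUff, deriv_U_eq hx]
    have hD2 : deriv (deriv U) η
        = -(1/5) * ff η ^ (-(2:ℝ)/3) - (2/25) * η ^ 2 * ff η ^ (-(5:ℝ)/3) := by
      rw [hderiv_ev.deriv_eq]
      exact (hasDerivAt_g hfne).deriv
    have hD1 : deriv U η = -(1/5) * η * ff η ^ (-(2:ℝ)/3) := by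
      rw [hUff, deriv_U_eq hfne]
    have hUη : U η = ff η ^ ((1:ℝ)/3) := rfl
    set t : ℝ := ff η ^ (-(1:ℝ)/3) with ht
    have ht2 : ff η ^ (-(2:ℝ)/3) = t ^ 2 := by
      rw [ht, ← Real.rpow_natCast (ff η ^ (-(1:ℝ)/3)) 2, ← Real.rpow_mul hf.le]
      norm_num
    have ht5 : ff η ^ (-(5:ℝ)/3) = t ^ 5 := by
      rw [ht, ← Real.rpow_natCast (ff η ^ (-(1:ℝ)/3)) 5, ← Real.rpow_mul hf.le]
      norm_num
    have hinv : (U η)⁻¹ = t := by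
      rw [hUη, ht, ← Real.rpow_neg_one (ff η ^ ((1:ℝ)/3)), ← Real.rpow_mul hf.le]
      norm_num
    have hz3 : (U η) ^ (-3 : ℤ) = t ^ 3 := by
      rw [hUη, ht, ← Real.rpow_intCast (ff η ^ ((1:ℝ)/3)) (-3), ← Real.rpow_mul hf.le,
        ← Real.rpow_natCast (ff η ^ (-(1:ℝ)/3)) 3, ← Real.rpow_mul hf.le]
      norm_num
    have hz2 : (U η) ^ (-2 : ℤ) = t ^ 2 := by
      rw [hUη, ht, ← Real.rpow_intCast (ff η ^ ((1:ℝ)/3)) (-2), ← Real.rpow_mul hf.le,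
        ← Real.rpow_natCast (ff η ^ (-(1:ℝ)/3)) 2, ← Real.rpow_mul hf.le]
      norm_num
    rw [hD2, hD1, hinv, hz3, hz2, ht2, ht5]
    ring
  · have h0 : ff 0 ≠ 0 := ne_of_gt (ff_pos (by norm_num))
    rw [hUff, deriv_U_eq h0]
    ring
  · have h1 : ff 1 = 1/8 := by unfold ff; norm_num
    show ff 1 ^ ((1:ℝ)/3) = 1/2
    rw [h1, cube_root_eighth]
  · have h1 : ff 1 ≠ 0 := by unfold ff; norm_num
    rw [hUff, deriv_U_eq h1, show ff 1 = 1/8 by unfold ff; norm_num, pow_eighth]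
    norm_num
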